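/- For a bounded lattice L, the complete lattice of saturated filters of its dual L-space, with the embedding a ↦ θ(a) = {x : a ∈ x}, is a canonical extension of L: it is dense (every element is both a join of closed elements and a meet of open elements) and compact. -/

import Mathlib

/-- A filter of a meet-semilattice: an upward-closed subset closed under binary
meets. -/
def IsFilt {X : Type*} [SemilatticeInf X] (s : Set X) : Prop :=
  (∀ x y : X, x ∈ s → x ≤ y → y ∈ s) ∧ ∀ x y : X, x ∈ s → y ∈ s → x ⊓ y ∈ s

variable (L : Type*) [Lattice L] [BoundedOrder L]

/-- The points of the dual L-space of `L`: its proper nonempty filters. -/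
def Pt : Type _ := {x : Set L // IsFilt x ∧ x.Nonempty ∧ ⊥ ∉ x}

/-- The basic sets `θ a = {x : a ∈ x}`. -/
def theta (a : L) : Set (Pt L) := {x : Pt L | a ∈ x.1}

/-- The Stone-type topology on the dual space of `L`. -/
def ptTop : TopologicalSpace (Pt L) :=
  TopologicalSpace.generateFrom
    ({s | ∃ a : L, s = theta L a} ∪ {s | ∃ a : L, s = (theta L a)ᶜ})

/-- A filter of the dual space (points ordered by inclusion, meets given by
intersections). -/
def IsFiltPt (F : Set (Pt L)) : Prop :=
  (∀ x y : Pt L, x ∈ F → x.1 ⊆ y.1 → y ∈ F) ∧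
  (∀ x y : Pt L, x ∈ F → y ∈ F → ∀ z : Pt L, z.1 = x.1 ∩ y.1 → z ∈ F)

/-- A saturated filter: one that is the intersection of all open filters
containing it. -/
def Sat (b : Set (Pt L)) : Prop :=
  IsFiltPt L b ∧
  b = ⋂₀ {o : Set (Pt L) | @IsOpen _ (ptTop L) o ∧ IsFiltPt L o ∧ b ⊆ o}

/-- The join of a family of saturated filters in the complete lattice of
saturated filters: the smallest saturated filter containing all of them. -/
def satJoin (S : Set (Set (Pt L))) : Set (Pt L) :=
  ⋂₀ {c : Set (Pt L) | Sat L c ∧ ∀ t ∈ S, t ⊆ c}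

/-- The closed elements of the completion: meets (intersections) of elements
of the image of `θ`. -/
def closedEl (c : Set (Pt L)) : Prop := ∃ A : Set L, c = ⋂ a ∈ A, theta L a

/-- The open elements of the completion: joins of elements of the image of
`θ`. -/
def openEl (o : Set (Pt L)) : Prop :=
  ∃ B : Set L, o = satJoin L {s | ∃ b ∈ B, s = theta L b}
lemma mem_theta {a : L} {x : Pt L} : x ∈ theta L a ↔ a ∈ x.1 := Iff.rfl

lemma up_mem {x : Pt L} {a b : L} (h : a ∈ x.1) (hle : a ≤ b) : b ∈ x.1 :=
  x.2.1.1 a b h hle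

lemma top_mem (x : Pt L) : (⊤ : L) ∈ x.1 := by
  obtain ⟨w, hw⟩ := x.2.2.1
  exact up_mem L hw le_top

lemma finset_inf_mem (x : Pt L) (C : Finset L) (h : ∀ a ∈ C, a ∈ x.1) :
    C.inf id ∈ x.1 := by
  classical
  induction C using Finset.induction with
  | empty => simpa using top_mem L x
  | @insert a s ha ih =>
    rw [Finset.inf_insert]
    exact x.2.1.2 _ _ (h a (Finset.mem_insert_self a s))
      (ih fun b hb => h b (Finset.mem_insert_of_mem hb))

/-- principal filter point -/
def pPt (a : L) (h : a ≠ ⊥) : Pt L :=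
  ⟨{z | a ≤ z}, ⟨fun _ _ hx hxy => le_trans hx hxy, fun _ _ hx hy => le_inf hx hy⟩,
    ⟨a, le_refl a⟩, fun hb => h (le_bot_iff.mp hb)⟩

lemma theta_bot : theta L (⊥ : L) = ∅ := by
  ext x; exact ⟨fun h => absurd h x.2.2.2, fun h => h.elim⟩

lemma theta_top : theta L (⊤ : L) = Set.univ := by
  ext x; exact ⟨fun _ => trivial, fun _ => top_mem L x⟩

lemma theta_join_subset {c : Set (Pt L)} (hc : IsFiltPt L c) {a b : L}
    (ha : theta L a ⊆ c) (hb : theta L b ⊆ c) : theta L (a ⊔ b) ⊆ c := by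
  by_cases h0 : a = ⊥
  · subst h0; simpa using hb
  by_cases h1 : b = ⊥
  · subst h1; simpa using ha
  intro x hx
  have hx' : a ⊔ b ∈ x.1 := hx
  have hab : a ⊔ b ≠ ⊥ := fun h => x.2.2.2 (by rw [h] at hx'; exact hx')
  have hpa : pPt L a h0 ∈ c := ha (le_refl a)
  have hpb : pPt L b h1 ∈ c := hb (le_refl b)
  have hz : pPt L (a ⊔ b) hab ∈ c := by
    refine hc.2 _ _ hpa hpb _ ?_
    ext z
    simp only [pPt, Set.mem_setOf_eq, Set.mem_inter_iff, sup_le_iff]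
  exact hc.1 _ x hz (fun z hz' => up_mem L hx' hz')

lemma theta_finsup_subset {c : Set (Pt L)} (hc : IsFiltPt L c) (E : Finset L)
    (h : ∀ b ∈ E, theta L b ⊆ c) : theta L (E.sup id) ⊆ c := by
  classical
  induction E using Finset.induction with
  | empty => rw [Finset.sup_empty]; rw [show ((⊥ : L) = ⊥) from rfl]
             rw [theta_bot]; exact Set.empty_subset c
  | @insert a s ha ih =>
    rw [Finset.sup_insert]
    exact theta_join_subset L hc (h a (Finset.mem_insert_self a s))
      (ih fun b hb => h b (Finset.mem_insert_of_mem hb))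

lemma gen_aux (o : Set (Pt L))
    (ho : TopologicalSpace.GenerateOpen
      ({s | ∃ a : L, s = theta L a} ∪ {s | ∃ a : L, s = (theta L a)ᶜ}) o) :
    ∀ x ∈ o, ∃ C D : Finset L, (∀ a ∈ C, a ∈ x.1) ∧ (∀ d ∈ D, d ∉ x.1) ∧
      ∀ y : Pt L, (∀ a ∈ C, a ∈ y.1) → (∀ d ∈ D, d ∉ y.1) → y ∈ o := by
  classical
  induction ho with
  | basic s hs =>
    intro x hx
    rcases hs with ⟨a, rfl⟩ | ⟨a, rfl⟩
    · exact ⟨{a}, ∅, by simpa [mem_theta] using hx, by simp,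
        fun y hy _ => hy a (Finset.mem_singleton_self a)⟩
    · exact ⟨∅, {a}, by simp, by simpa [mem_theta] using hx,
        fun y _ hy => hy a (Finset.mem_singleton_self a)⟩
  | univ => exact fun x _ => ⟨∅, ∅, by simp, by simp, fun y _ _ => trivial⟩
  | inter s t _ _ ihs iht =>
    intro x hx
    obtain ⟨C₁, D₁, h1, h2, h3⟩ := ihs x hx.1
    obtain ⟨C₂, D₂, h4, h5, h6⟩ := iht x hx.2
    refine ⟨C₁ ∪ C₂, D₁ ∪ D₂, ?_, ?_, ?_⟩
    · intro a ha; rcases Finset.mem_union.mp ha with h | h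
      exacts [h1 a h, h4 a h]
    · intro d hd; rcases Finset.mem_union.mp hd with h | h
      exacts [h2 d h, h5 d h]
    · intro y hy hy'
      exact ⟨h3 y (fun a ha => hy a (Finset.mem_union_left _ ha))
          (fun d hd => hy' d (Finset.mem_union_left _ hd)),
        h6 y (fun a ha => hy a (Finset.mem_union_right _ ha))
          (fun d hd => hy' d (Finset.mem_union_right _ hd))⟩
  | sUnion T _ ih =>
    intro x hx
    obtain ⟨t, ht, hxt⟩ := hx
    obtain ⟨C, D, h1, h2, h3⟩ := ih t ht x hxt
    exact ⟨C, D, h1, h2, fun y hy hy' => ⟨t, ht, h3 y hy hy'⟩⟩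

lemma open_filter_basis {o : Set (Pt L)} (ho : @IsOpen _ (ptTop L) o)
    (hf : IsFiltPt L o) {x : Pt L} (hx : x ∈ o) :
    ∃ c, c ∈ x.1 ∧ theta L c ⊆ o := by
  have ho' : TopologicalSpace.GenerateOpen
      ({s | ∃ a : L, s = theta L a} ∪ {s | ∃ a : L, s = (theta L a)ᶜ}) o := ho
  obtain ⟨C, D, h1, h2, h3⟩ := gen_aux L o ho' x hx
  have hc : C.inf id ∈ x.1 := finset_inf_mem L x C h1
  have hcb : C.inf id ≠ ⊥ := fun h => x.2.2.2 (by rw [h] at hc; exact hc)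
  have hp : pPt L (C.inf id) hcb ∈ o :=
    h3 _ (fun a ha => Finset.inf_le ha)
      (fun d hd hle => h2 d hd (up_mem L hc hle))
  exact ⟨C.inf id, hc, fun y hy => hf.1 _ y hp (fun z hz => up_mem L hy hz)⟩

lemma sat_of_open_filter {o : Set (Pt L)} (ho : @IsOpen _ (ptTop L) o)
    (hf : IsFiltPt L o) : Sat L o :=
  ⟨hf, Set.Subset.antisymm
    (fun x hx => Set.mem_sInter.2 fun _ hc => hc.2.2 hx)
    (Set.sInter_subset_of_mem ⟨ho, hf, subset_rfl⟩)⟩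

lemma theta_open (a : L) : @IsOpen _ (ptTop L) (theta L a) :=
  TopologicalSpace.GenerateOpen.basic _ (Or.inl ⟨a, rfl⟩)

lemma theta_filt (a : L) : IsFiltPt L (theta L a) :=
  ⟨fun _ y hx hxy => hxy hx,
   fun _ _ hx hy z hz => by
     show a ∈ z.1; rw [hz]; exact ⟨hx, hy⟩⟩

lemma sat_theta (a : L) : Sat L (theta L a) :=
  sat_of_open_filter L (theta_open L a) (theta_filt L a)

lemma le_satJoin {S : Set (Set (Pt L))} {t : Set (Pt L)} (ht : t ∈ S) :
    t ⊆ satJoin L S :=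
  fun _ hx => Set.mem_sInter.2 fun _ hc => hc.2 t ht hx

lemma satJoin_le {S : Set (Set (Pt L))} {c : Set (Pt L)} (hc : Sat L c)
    (h : ∀ t ∈ S, t ⊆ c) : satJoin L S ⊆ c :=
  Set.sInter_subset_of_mem ⟨hc, h⟩
/-- The complete lattice of saturated filters of the dual L-space of a bounded
lattice `L`, with the embedding `θ`, is a canonical extension of `L`:
`θ` is a lattice embedding into the saturated filters, the completion is
dense (every element is a join of closed elements and a meet of open
elements), and it is compact. -/
theorem saturated_filters_are_canonical_extension :
    (∀ a : L, Sat L (theta L a)) ∧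
    Function.Injective (theta L) ∧
    (∀ a b : L, theta L (a ⊓ b) = theta L a ∩ theta L b) ∧
    (∀ a b : L, theta L (a ⊔ b) = satJoin L {theta L a, theta L b}) ∧
    theta L (⊤ : L) = Set.univ ∧ theta L (⊥ : L) = ∅ ∧
    (∀ b : Set (Pt L), Sat L b →
      (∃ C : Set (Set (Pt L)), (∀ c ∈ C, closedEl L c ∧ Sat L c) ∧
        b = satJoin L C) ∧
      (∃ O : Set (Set (Pt L)), (∀ o ∈ O, openEl L o ∧ Sat L o) ∧
        b = ⋂₀ O)) ∧
    (∀ CS OS : Set (Set (Pt L)),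
      (∀ c ∈ CS, closedEl L c) → (∀ o ∈ OS, openEl L o) →
      (⋂₀ CS ⊆ satJoin L OS ↔
        ∃ CS' OS' : Finset (Set (Pt L)), ↑CS' ⊆ CS ∧ ↑OS' ⊆ OS ∧
          ⋂₀ (CS' : Set (Set (Pt L))) ⊆ satJoin L (OS' : Set (Set (Pt L))))) := by
  classical
  refine ⟨sat_theta L, ?_, ?_, ?_, theta_top L, theta_bot L, ?_, ?_⟩
  · -- injectivity
    intro a b hab
    by_cases ha : a = ⊥
    · subst ha
      by_contra hb'
      have hb : b ≠ ⊥ := fun h => hb' h.symm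
      have : pPt L b hb ∈ theta L (⊥ : L) := by rw [hab]; exact le_refl b
      exact (pPt L b hb).2.2.2 this
    · by_cases hb : b = ⊥
      · subst hb
        have : pPt L a ha ∈ theta L (⊥ : L) := by rw [← hab]; exact le_refl a
        exact absurd this (pPt L a ha).2.2.2
      · have h1 : pPt L a ha ∈ theta L b := by rw [← hab]; exact le_refl a
        have h2 : pPt L b hb ∈ theta L a := by rw [hab]; exact le_refl b
        exact le_antisymm (show a ≤ b from h1) (show b ≤ a from h2)
  · -- meet
    intro a b
    ext x
    exact ⟨fun h => ⟨up_mem L h inf_le_left, up_mem L h inf_le_right⟩,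
      fun h => x.2.1.2 a b h.1 h.2⟩
  · -- join
    intro a b
    refine Set.Subset.antisymm ?_ ?_
    · intro x hx
      refine Set.mem_sInter.2 fun c hc => ?_
      exact theta_join_subset L hc.1.1 (hc.2 _ (Or.inl rfl)) (hc.2 _ (Or.inr rfl)) hx
    · exact satJoin_le L (sat_theta L (a ⊔ b)) (by
        rintro t (rfl | rfl)
        · exact fun x hx => up_mem L hx le_sup_left
        · exact fun x hx => up_mem L hx le_sup_right)
  · -- density
    intro b hb
    constructor
    · refine ⟨{c | ∃ x ∈ b, c = {y : Pt L | x.1 ⊆ y.1}}, ?_, ?_⟩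
      · rintro c ⟨x, hx, rfl⟩
        constructor
        · exact ⟨x.1, by
            ext y
            simp only [Set.mem_iInter, Set.mem_setOf_eq]
            exact ⟨fun h a ha => h ha, fun h a ha => h a ha⟩⟩
        · constructor
          · exact ⟨fun u v hu huv => hu.trans huv,
              fun u v hu hv z hz => by
                show x.1 ⊆ z.1; rw [hz]; exact Set.subset_inter hu hv⟩
          · refine Set.Subset.antisymm
              (fun y hy => Set.mem_sInter.2 fun _ hc => hc.2.2 hy) ?_
            intro y hy
            intro a ha
            exact hy (theta L a) ⟨theta_open L a, theta_filt L a,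
              fun z hz => hz ha⟩
      · refine Set.Subset.antisymm ?_
          (satJoin_le L hb (by
            rintro t ⟨x, hx, rfl⟩
            exact fun y hy => hb.1.1 x y hx hy))
        intro x hx
        refine Set.mem_sInter.2 fun c hc => ?_
        exact hc.2 {y : Pt L | x.1 ⊆ y.1} ⟨x, hx, rfl⟩ (subset_refl x.1)
    · refine ⟨{o | @IsOpen _ (ptTop L) o ∧ IsFiltPt L o ∧ b ⊆ o}, ?_, hb.2⟩
      rintro o ⟨ho, hf, -⟩
      refine ⟨⟨{c | theta L c ⊆ o}, ?_⟩, sat_of_open_filter L ho hf⟩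
      refine Set.Subset.antisymm ?_ ?_
      · intro x hx
        obtain ⟨c, hc, hco⟩ := open_filter_basis L ho hf hx
        refine le_satJoin L (t := theta L c) ?_ hc
        exact ⟨c, hco, rfl⟩
      · exact satJoin_le L (sat_of_open_filter L ho hf)
          (by rintro s ⟨b', hb', rfl⟩; exact hb')
  · -- compactness
    intro CS OS hCS hOS
    constructor
    · intro h
      set A : Set L := {a | ∃ c, c ∈ CS ∧ c ⊆ theta L a} with hA
      set Bs : Set L := {b | ∃ t, t ∈ OS ∧ theta L b ⊆ t} with hBs
      -- main finite claim
      have key : ∃ E' E : Finset L, (∀ a ∈ E', a ∈ A) ∧ (∀ b' ∈ E, b' ∈ Bs) ∧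
          E'.inf id ≤ E.sup id := by
        set Fs : Set L := {z | ∃ E' : Finset L, (∀ a ∈ E', a ∈ A) ∧ E'.inf id ≤ z}
          with hFs
        by_cases hbot : (⊥ : L) ∈ Fs
        · obtain ⟨E', hE', hle⟩ := hbot
          exact ⟨E', ∅, hE', by simp, by simpa using hle⟩
        · have hFfilt : IsFilt Fs :=
            ⟨fun z w ⟨E', h1, h2⟩ hzw => ⟨E', h1, h2.trans hzw⟩,
             fun z w ⟨E1, h1, h2⟩ ⟨E2, h3, h4⟩ =>
               ⟨E1 ∪ E2, fun a ha => (Finset.mem_union.mp ha).elim (h1 a) (h3 a),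
                le_inf ((Finset.inf_mono Finset.subset_union_left).trans h2)
                  ((Finset.inf_mono Finset.subset_union_right).trans h4)⟩⟩
          set F : Pt L := ⟨Fs, hFfilt, ⟨⊤, ∅, by simp, by simp⟩, hbot⟩ with hF
          have hmemA : ∀ a ∈ A, a ∈ Fs := fun a ha =>
            ⟨{a}, by simpa using ha, by simp⟩
          have hFCS : F ∈ ⋂₀ CS := by
            intro c hc
            obtain ⟨Ac, rfl⟩ := hCS c hc
            refine Set.mem_iInter.2 fun a => Set.mem_iInter.2 fun ha => ?_
            refine hmemA a ⟨_, hc, ?_⟩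
            intro y hy
            exact (Set.mem_iInter.mp (Set.mem_iInter.mp hy a)) ha
          have hFJ : F ∈ satJoin L OS := h hFCS
          -- claim: some finite sup of Bs lies in Fs
          by_contra hcon
          push_neg at hcon
          set o : Set (Pt L) :=
            {x | ∃ E : Finset L, (∀ b' ∈ E, b' ∈ Bs) ∧ E.sup id ∈ x.1} with hodef
          have hoopen : @IsOpen _ (ptTop L) o := by
            have : o = ⋃₀ {s | ∃ E : Finset L, (∀ b' ∈ E, b' ∈ Bs) ∧
                s = theta L (E.sup id)} := by
              ext x
              constructor
              · rintro ⟨E, h1, h2⟩; exact ⟨theta L (E.sup id), ⟨E, h1, rfl⟩, h2⟩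
              · rintro ⟨s, ⟨E, h1, rfl⟩, hx⟩; exact ⟨E, h1, hx⟩
            rw [this]
            exact TopologicalSpace.GenerateOpen.sUnion _
              (by rintro s ⟨E, -, rfl⟩
                  exact TopologicalSpace.GenerateOpen.basic _ (Or.inl ⟨_, rfl⟩))
          have hofilt : IsFiltPt L o :=
            ⟨fun x y ⟨E, h1, h2⟩ hxy => ⟨E, h1, hxy h2⟩,
             fun x y ⟨E1, h1, h2⟩ ⟨E2, h3, h4⟩ z hz =>
               ⟨E1 ∪ E2, fun b' hb' => (Finset.mem_union.mp hb').elim (h1 b') (h3 b'),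
                by
                  rw [hz]
                  exact ⟨up_mem L h2 (Finset.sup_mono Finset.subset_union_left),
                    up_mem L h4 (Finset.sup_mono Finset.subset_union_right)⟩⟩⟩
          have hoin : F ∈ o := by
            refine hFJ o ⟨sat_of_open_filter L hoopen hofilt, ?_⟩
            intro t ht
            obtain ⟨B, rfl⟩ := hOS t ht
            refine satJoin_le L (sat_of_open_filter L hoopen hofilt) ?_
            rintro s ⟨b', hb', rfl⟩
            have hbBs : b' ∈ Bs := ⟨_, ht, le_satJoin L ⟨b', hb', rfl⟩⟩
            intro x hx
            exact ⟨{b'}, by simpa using hbBs, by rw [Finset.sup_singleton]; exact hx⟩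
          obtain ⟨E, hE1, hE2⟩ := hoin
          obtain ⟨E', hE'1, hE'2⟩ := hE2
          exact hcon E' E hE'1 hE1 hE'2
      obtain ⟨E', E, hE'A, hEB, hle⟩ := key
      have h1 : ∀ a : L, a ∈ A → ∃ c, c ∈ CS ∧ c ⊆ theta L a := fun a ha => ha
      choose! f hf1 hf2 using h1
      have h2 : ∀ b' : L, b' ∈ Bs → ∃ t, t ∈ OS ∧ theta L b' ⊆ t := fun b' hb' => hb'
      choose! g hg1 hg2 using h2
      refine ⟨E'.image f, E.image g, ?_, ?_, ?_⟩
      · intro c hc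
        simp only [Finset.coe_image, Set.mem_image, Finset.mem_coe] at hc
        obtain ⟨a, ha, rfl⟩ := hc
        exact hf1 a (hE'A a ha)
      · intro t ht
        simp only [Finset.coe_image, Set.mem_image, Finset.mem_coe] at ht
        obtain ⟨b', hb', rfl⟩ := ht
        exact hg1 b' (hEB b' hb')
      · intro x hx
        have hxE : E.sup id ∈ x.1 := by
          refine up_mem L (finset_inf_mem L x E' fun a ha => ?_) hle
          exact hf2 a (hE'A a ha)
            (hx (f a) (by
              simp only [Finset.coe_image, Set.mem_image, Finset.mem_coe]
              exact ⟨a, ha, rfl⟩))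
        refine Set.mem_sInter.2 fun c hc => ?_
        refine theta_finsup_subset L hc.1.1 E (fun b' hb' => ?_) hxE
        refine (hg2 b' (hEB b' hb')).trans (hc.2 (g b') ?_)
        simp only [Finset.coe_image, Set.mem_image, Finset.mem_coe]
        exact ⟨b', hb', rfl⟩
    · rintro ⟨CS', OS', h1, h2, h3⟩
      refine (Set.sInter_subset_sInter h1).trans (h3.trans ?_)
      exact Set.sInter_subset_sInter fun c hc => ⟨hc.1, fun t ht => hc.2 t (h2 ht)⟩
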